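/- Let a, σ̃ > 0 and b > 0, and set σ = σ̃/√(2a). Then the function f(r) = D̃_{b/a}((b − r)/σ) is twice differentiable on ℝ and satisfies the second-order ODE (σ̃²/2)·f''(r) + a(b − r)·f'(r) − b·f(r) = 0 for all r ∈ ℝ. -/

import Mathlib

open Real Filter Finset MeasureTheory

/-- The even power series `u(z) = 1 + ∑_{k=1}^∞ (∏_{j=0}^{k-1}(ν+2j)) z^{2k}/(2k)!`
(the `k = 0` term of the `tsum` equals `1`). -/
noncomputable def evenSeries (ν z : ℝ) : ℝ :=
  ∑' k : ℕ, (∏ j ∈ Finset.range k, (ν + 2 * (j : ℝ))) * z ^ (2 * k) / (Nat.factorial (2 * k))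

/-- The odd power series `v(z) = ∑_{k=0}^∞ (∏_{j=0}^{k-1}(ν+2j+1)) z^{2k+1}/(2k+1)!`
(the `k = 0` term equals `z`). -/
noncomputable def oddSeries (ν z : ℝ) : ℝ :=
  ∑' k : ℕ, (∏ j ∈ Finset.range k, (ν + 2 * (j : ℝ) + 1)) * z ^ (2 * k + 1) /
    (Nat.factorial (2 * k + 1))

/-- The modified parabolic cylinder function
`D̃_ν(y) = 2^{−ν/2} √π [ (1 + ∑_{k≥1} ∏_{j=0}^{k-1}(ν+2j) y^{2k}/(2k)!)/Γ((ν+1)/2)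
  − √2 y (1 + ∑_{k≥1} ∏_{j=0}^{k-1}(ν+2j+1) y^{2k}/(2k+1)!)/Γ(ν/2) ]`,
which equals `e^{y²/4} D_{−ν}(y)` for the parabolic cylinder function `D_{−ν}`.
Note `y * (1 + ∑_{k≥1} ∏_{j=0}^{k-1}(ν+2j+1) y^{2k}/(2k+1)!) = oddSeries ν y`. -/
noncomputable def Dtilde (ν : ℝ) (y : ℝ) : ℝ :=
  (2 : ℝ) ^ (-ν / 2) * Real.sqrt Real.pi *
    (evenSeries ν y / Real.Gamma ((ν + 1) / 2) -
      Real.sqrt 2 * oddSeries ν y / Real.Gamma (ν / 2))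

/-! ### Auxiliary coefficients and series -/

/-- The coefficient `∏_{j<k} (μ + 2j + 1)`. -/
noncomputable def dcoef (μ : ℝ) (k : ℕ) : ℝ := ∏ j ∈ Finset.range k, (μ + 2 * (j : ℝ) + 1)

/-- The even-type series with coefficients `dcoef μ`. -/
noncomputable def oddD (μ y : ℝ) : ℝ := ∑' k : ℕ, dcoef μ k * y ^ (2*k) / (Nat.factorial (2*k))

/-- The odd-type series with coefficients `dcoef μ`. -/
noncomputable def oddS (μ y : ℝ) : ℝ := ∑' k : ℕ, dcoef μ k * y ^ (2*k+1) / (Nat.factorial (2*k+1))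

lemma oddSeries_eq (μ y : ℝ) : oddSeries μ y = oddS μ y := rfl

lemma evenSeries_eq (ν y : ℝ) : evenSeries ν y = oddD (ν-1) y := by
  unfold evenSeries oddD
  refine tsum_congr fun k => ?_
  rw [show (∏ j ∈ Finset.range k, (ν + 2 * (j : ℝ)))
      = ∏ j ∈ Finset.range k, ((ν-1) + 2 * (j : ℝ) + 1) from
    Finset.prod_congr rfl fun j _ => by ring]
  rfl

lemma dcoef_succ (μ : ℝ) (k : ℕ) : dcoef μ (k+1) = dcoef μ k * (μ + 2*k + 1) := by
  simp [dcoef, Finset.prod_range_succ]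

lemma dcoef_succ' (μ : ℝ) (k : ℕ) : dcoef μ (k+1) = (μ+1) * dcoef (μ+2) k := by
  rw [dcoef, Finset.prod_range_succ']
  rw [show (∏ j ∈ Finset.range k, (μ + 2 * ((j:ℕ)+1 : ℕ) + 1)) = dcoef (μ+2) k by
    refine Finset.prod_congr rfl fun j _ => ?_; push_cast; ring]
  push_cast; ring

lemma dcoef_nonneg {μ : ℝ} (hμ : -1 < μ) (k : ℕ) : 0 ≤ dcoef μ k :=
  Finset.prod_nonneg fun j _ => by
    have : (0:ℝ) ≤ j := Nat.cast_nonneg j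
    linarith

lemma dcoef_le {μ : ℝ} (hμ : -1 < μ) (k : ℕ) :
    dcoef μ k ≤ (μ+3)^k * (Nat.factorial k) := by
  induction k with
  | zero => simp [dcoef]
  | succ k ih =>
    rw [dcoef_succ]
    have hk : (0:ℝ) ≤ k := Nat.cast_nonneg k
    have h1 : μ + 2*k + 1 ≤ (μ+3) * (k+1) := by nlinarith
    have h3 : (0:ℝ) ≤ μ + 2*k+1 := by linarith
    calc dcoef μ k * (μ+2*k+1) ≤ ((μ+3)^k * (Nat.factorial k)) * ((μ+3)*(k+1)) := by
          apply mul_le_mul ih h1 h3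
          apply mul_nonneg (pow_nonneg (by linarith) k) (by positivity)
      _ = (μ+3)^(k+1) * (Nat.factorial (k+1)) := by
          rw [Nat.factorial_succ]; push_cast; ring

lemma fact_sq_le (k : ℕ) : ((Nat.factorial k : ℝ)) * (Nat.factorial k) ≤ (Nat.factorial (2*k)) := by
  have h := Nat.le_of_dvd (Nat.factorial_pos _) (Nat.factorial_mul_factorial_dvd_factorial_add k k)
  rw [two_mul]
  exact_mod_cast h

lemma fact_sq_le' (k : ℕ) : ((Nat.factorial k : ℝ)) * (Nat.factorial k) ≤ (Nat.factorial (2*k+1)) := by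
  refine le_trans (fact_sq_le k) ?_
  exact_mod_cast Nat.factorial_le (by omega)

/-! ### Term bounds and summability -/

lemma even_term_le {μ : ℝ} (hμ : -1 < μ) {x R : ℝ} (hx : |x| ≤ R) (k : ℕ) :
    ‖dcoef μ k * x ^ (2*k) / (Nat.factorial (2*k))‖ ≤ ((μ+3)*R^2)^k / (Nat.factorial k) := by
  have hR : 0 ≤ R := le_trans (abs_nonneg x) hx
  have hd := dcoef_nonneg hμ k
  have hdle := dcoef_le hμ k
  have hB : (0:ℝ) ≤ μ + 3 := by linarith
  rw [Real.norm_eq_abs, abs_div, abs_mul, abs_pow, Nat.abs_cast, abs_of_nonneg hd]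
  have hxR : |x|^(2*k) ≤ R^(2*k) := pow_le_pow_left₀ (abs_nonneg x) hx _
  calc dcoef μ k * |x|^(2*k) / (Nat.factorial (2*k))
      ≤ ((μ+3)^k * (Nat.factorial k)) * R^(2*k) / ((Nat.factorial k) * (Nat.factorial k)) := by
        apply div_le_div₀ (by positivity) (mul_le_mul hdle hxR (by positivity) (by positivity))
          (by positivity) (fact_sq_le k)
    _ = ((μ+3)*R^2)^k / (Nat.factorial k) := by
        rw [mul_pow, pow_mul]
        have h0 : ((Nat.factorial k : ℝ)) ≠ 0 := by positivity
        field_simp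

lemma odd_term_le {μ : ℝ} (hμ : -1 < μ) {x R : ℝ} (hx : |x| ≤ R) (k : ℕ) :
    ‖dcoef μ k * x ^ (2*k+1) / (Nat.factorial (2*k+1))‖
      ≤ R * (((μ+3)*R^2)^k / (Nat.factorial k)) := by
  have hR : 0 ≤ R := le_trans (abs_nonneg x) hx
  have hd := dcoef_nonneg hμ k
  have hdle := dcoef_le hμ k
  have hB : (0:ℝ) ≤ μ + 3 := by linarith
  rw [Real.norm_eq_abs, abs_div, abs_mul, abs_pow, Nat.abs_cast, abs_of_nonneg hd]
  have hxR : |x|^(2*k+1) ≤ R^(2*k+1) := pow_le_pow_left₀ (abs_nonneg x) hx _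
  calc dcoef μ k * |x|^(2*k+1) / (Nat.factorial (2*k+1))
      ≤ ((μ+3)^k * (Nat.factorial k)) * R^(2*k+1) / ((Nat.factorial k) * (Nat.factorial k)) := by
        apply div_le_div₀ (by positivity) (mul_le_mul hdle hxR (by positivity) (by positivity))
          (by positivity) (fact_sq_le' k)
    _ = R * (((μ+3)*R^2)^k / (Nat.factorial k)) := by
        rw [mul_pow, pow_succ, pow_mul]
        have h0 : ((Nat.factorial k : ℝ)) ≠ 0 := by positivity
        field_simp

lemma summable_even {μ : ℝ} (hμ : -1 < μ) (y : ℝ) :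
    Summable (fun k => dcoef μ k * y^(2*k) / (Nat.factorial (2*k))) :=
  Summable.of_norm_bounded (Real.summable_pow_div_factorial ((μ+3)*|y|^2))
    (fun k => even_term_le hμ le_rfl k)

lemma summable_odd {μ : ℝ} (hμ : -1 < μ) (y : ℝ) :
    Summable (fun k => dcoef μ k * y^(2*k+1) / (Nat.factorial (2*k+1))) :=
  Summable.of_norm_bounded ((Real.summable_pow_div_factorial ((μ+3)*|y|^2)).mul_left |y|)
    (fun k => odd_term_le hμ le_rfl k)

/-! ### Differentiability of the series -/

lemma hasDerivAt_oddS {μ : ℝ} (hμ : -1 < μ) (y : ℝ) :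
    HasDerivAt (fun z => oddS μ z) (oddD μ y) y := by
  set R := |y| + 1 with hR
  have hyR : |y| < R := by rw [hR]; linarith [abs_nonneg y]
  have hmem : y ∈ Metric.ball (0:ℝ) R := by
    simpa [Metric.mem_ball, Real.dist_eq] using hyR
  have h := hasDerivAt_tsum_of_isPreconnected
    (u := fun k => ((μ+3)*R^2)^k / (Nat.factorial k))
    (g := fun k z => dcoef μ k * z ^ (2*k+1) / (Nat.factorial (2*k+1)))
    (g' := fun k x => dcoef μ k * x ^ (2*k) / (Nat.factorial (2*k)))
    (Real.summable_pow_div_factorial _)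
    Metric.isOpen_ball
    ((convex_ball (0:ℝ) R).isPreconnected)
    (fun k x _ => by
      have h := ((hasDerivAt_pow (2*k+1) x).const_mul (dcoef μ k)).div_const
        ((Nat.factorial (2*k+1) : ℝ))
      convert h using 1
      · rfl
      rw [show 2*k+1-1 = 2*k from rfl]
      have hf : ((Nat.factorial (2*k+1) : ℝ)) = (2*k+1) * (Nat.factorial (2*k)) := by
        rw [Nat.factorial_succ]; push_cast; ring
      have h0 : ((Nat.factorial (2*k) : ℝ)) ≠ 0 := by positivity
      rw [hf]
      field_simp
      push_cast
      ring)
    (fun k x hx => by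
      have hxR : |x| ≤ R := by
        have := Metric.mem_ball.mp hx
        rw [Real.dist_eq, sub_zero] at this
        linarith
      exact even_term_le hμ hxR k)
    hmem
    (summable_odd hμ y)
    hmem
  exact h

lemma deriv_term_le {μ : ℝ} (hμ : -1 < μ) {x R : ℝ} (hx : |x| ≤ R) (hR1 : 1 ≤ R) (k : ℕ) :
    ‖dcoef μ k * (((2*k : ℕ) : ℝ) * x ^ (2*k-1)) / (Nat.factorial (2*k))‖
      ≤ 2 * ((2*((μ+3)*R^2))^k / (Nat.factorial k)) := by
  have hR : 0 ≤ R := by linarith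
  have hd := dcoef_nonneg hμ k
  have hdle := dcoef_le hμ k
  have hB : (0:ℝ) ≤ μ + 3 := by linarith
  rw [Real.norm_eq_abs, abs_div, abs_mul, abs_mul, abs_pow, Nat.abs_cast, Nat.abs_cast,
    abs_of_nonneg hd]
  have hxR : |x|^(2*k-1) ≤ R^(2*k) :=
    le_trans (pow_le_pow_left₀ (abs_nonneg x) hx _) (pow_le_pow_right₀ hR1 (Nat.sub_le _ _))
  have hk2 : ((2*k : ℕ) : ℝ) ≤ 2 * 2^k := by
    have : (k:ℝ) ≤ 2^k := by exact_mod_cast (Nat.lt_two_pow_self (n := k)).le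
    push_cast; linarith
  calc dcoef μ k * (((2*k:ℕ):ℝ) * |x|^(2*k-1)) / (Nat.factorial (2*k))
      ≤ ((μ+3)^k * (Nat.factorial k)) * ((2*2^k) * R^(2*k)) / ((Nat.factorial k) * (Nat.factorial k)) := by
        apply div_le_div₀ (by positivity)
          (mul_le_mul hdle (mul_le_mul hk2 hxR (by positivity) (by positivity)) (by positivity)
            (by positivity))
          (by positivity) (fact_sq_le k)
    _ = 2 * ((2*((μ+3)*R^2))^k / (Nat.factorial k)) := by
        rw [mul_pow, mul_pow, pow_mul]
        have h0 : ((Nat.factorial k : ℝ)) ≠ 0 := by positivity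
        field_simp

lemma hasDerivAt_oddD {μ : ℝ} (hμ : -1 < μ) (y : ℝ) :
    HasDerivAt (fun z => oddD μ z) ((μ+1) * oddS (μ+2) y) y := by
  set R := |y| + 1 with hR
  have hR1 : (1:ℝ) ≤ R := by rw [hR]; linarith [abs_nonneg y]
  have hyR : |y| < R := by rw [hR]; linarith
  have hmem : y ∈ Metric.ball (0:ℝ) R := by
    simpa [Metric.mem_ball, Real.dist_eq] using hyR
  have habs : ∀ x : ℝ, x ∈ Metric.ball (0:ℝ) R → |x| ≤ R := fun x hx => by
    have := Metric.mem_ball.mp hx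
    rw [Real.dist_eq, sub_zero] at this
    linarith
  have h := hasDerivAt_tsum_of_isPreconnected
    (u := fun k => 2 * ((2*((μ+3)*R^2))^k / (Nat.factorial k)))
    (g := fun k z => dcoef μ k * z ^ (2*k) / (Nat.factorial (2*k)))
    (g' := fun k x => dcoef μ k * (((2*k : ℕ) : ℝ) * x ^ (2*k-1)) / (Nat.factorial (2*k)))
    ((Real.summable_pow_div_factorial _).mul_left 2)
    Metric.isOpen_ball
    ((convex_ball (0:ℝ) R).isPreconnected)
    (fun k x _ => ((hasDerivAt_pow (2*k) x).const_mul (dcoef μ k)).div_const _)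
    (fun k x hx => deriv_term_le hμ (habs x hx) hR1 k)
    hmem
    (summable_even hμ y)
    hmem
  have hsum : Summable (fun k => dcoef μ k * (((2*k : ℕ) : ℝ) * y ^ (2*k-1)) / (Nat.factorial (2*k))) :=
    Summable.of_norm_bounded ((Real.summable_pow_div_factorial _).mul_left 2)
      (fun k => deriv_term_le hμ hyR.le hR1 k)
  have hval : (∑' k : ℕ, dcoef μ k * (((2*k : ℕ) : ℝ) * y ^ (2*k-1)) / (Nat.factorial (2*k)))
      = (μ+1) * oddS (μ+2) y := by
    rw [Summable.tsum_eq_zero_add hsum]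
    have h0 : dcoef μ 0 * (((2*0 : ℕ) : ℝ) * y ^ (2*0-1)) / (Nat.factorial (2*0)) = 0 := by
      simp
    rw [h0, zero_add]
    have hterm : ∀ k : ℕ, dcoef μ (k+1) * (((2*(k+1) : ℕ) : ℝ) * y ^ (2*(k+1)-1)) / (Nat.factorial (2*(k+1)))
        = (μ+1) * (dcoef (μ+2) k * y ^ (2*k+1) / (Nat.factorial (2*k+1))) := by
      intro k
      rw [show 2*(k+1)-1 = 2*k+1 from by omega, show 2*(k+1) = (2*k+1)+1 from by omega,
        Nat.factorial_succ, dcoef_succ']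
      have h0 : ((Nat.factorial (2*k+1) : ℝ)) ≠ 0 := by positivity
      push_cast
      field_simp
    rw [tsum_congr hterm, tsum_mul_left]
    rfl
  rw [← hval]
  exact h

/-! ### The two recurrence identities -/

lemma identity_I1 {μ : ℝ} (hμ : -1 < μ) (y : ℝ) :
    (μ+1) * oddS (μ+2) y = y * oddD μ y + μ * oddS μ y := by
  rw [oddS, oddD, oddS, ← tsum_mul_left, ← tsum_mul_left, ← tsum_mul_left,
    ← Summable.tsum_add ((summable_even hμ y).mul_left y) ((summable_odd hμ y).mul_left μ)]
  refine tsum_congr fun k => ?_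
  have hd : (μ+1) * dcoef (μ+2) k = dcoef μ k * (μ + 2*k + 1) := by
    rw [← dcoef_succ', dcoef_succ]
  have hfac : ((Nat.factorial (2*k+1) : ℝ)) = (2*(k:ℝ)+1) * (Nat.factorial (2*k)) := by
    rw [Nat.factorial_succ]; push_cast; ring
  have h0 : ((Nat.factorial (2*k) : ℝ)) ≠ 0 := by positivity
  have h1 : (2*(k:ℝ)+1) ≠ 0 := by positivity
  rw [hfac]
  have key : (μ+1) * (dcoef (μ+2) k * y ^ (2*k+1))
      = (y * (dcoef μ k * y ^ (2*k))) * (2*(k:ℝ)+1) + μ * (dcoef μ k * y ^ (2*k+1)) := by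
    linear_combination y ^ (2*k+1) * hd
  calc (μ+1) * (dcoef (μ+2) k * y ^ (2*k+1) / ((2*(k:ℝ)+1) * (Nat.factorial (2*k))))
      = ((μ+1) * (dcoef (μ+2) k * y ^ (2*k+1))) / ((2*(k:ℝ)+1) * (Nat.factorial (2*k))) := by
        ring
    _ = ((y * (dcoef μ k * y ^ (2*k))) * (2*(k:ℝ)+1) + μ * (dcoef μ k * y ^ (2*k+1)))
          / ((2*(k:ℝ)+1) * (Nat.factorial (2*k))) := by rw [key]
    _ = y * (dcoef μ k * y ^ (2*k) / (Nat.factorial (2*k)))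
          + μ * (dcoef μ k * y ^ (2*k+1) / ((2*(k:ℝ)+1) * (Nat.factorial (2*k)))) := by
        field_simp

lemma identity_I2 {μ : ℝ} (hμ : -1 < μ) (y : ℝ) :
    oddD (μ+2) y - oddD μ y = y * oddS (μ+2) y := by
  have hμ2 : (-1:ℝ) < μ + 2 := by linarith
  have hS : Summable (fun k => (dcoef (μ+2) k - dcoef μ k) * y ^ (2*k) / (Nat.factorial (2*k))) := by
    have := (summable_even hμ2 y).sub (summable_even hμ y)
    refine this.congr fun k => ?_
    ring
  have step1 : oddD (μ+2) y - oddD μ y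
      = ∑' k : ℕ, (dcoef (μ+2) k - dcoef μ k) * y ^ (2*k) / (Nat.factorial (2*k)) := by
    rw [oddD, oddD, ← Summable.tsum_sub (summable_even hμ2 y) (summable_even hμ y)]
    exact tsum_congr fun k => by ring
  rw [step1, Summable.tsum_eq_zero_add hS]
  have h0 : (dcoef (μ+2) 0 - dcoef μ 0) * y ^ (2*0) / (Nat.factorial (2*0)) = 0 := by
    simp [dcoef]
  rw [h0, zero_add]
  have hterm : ∀ k : ℕ, (dcoef (μ+2) (k+1) - dcoef μ (k+1)) * y ^ (2*(k+1)) / (Nat.factorial (2*(k+1)))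
      = y * (dcoef (μ+2) k * y ^ (2*k+1) / (Nat.factorial (2*k+1))) := by
    intro k
    have hd : dcoef (μ+2) (k+1) - dcoef μ (k+1) = (2*(k:ℝ)+2) * dcoef (μ+2) k := by
      rw [dcoef_succ, dcoef_succ']
      ring
    rw [hd, show 2*(k+1) = (2*k+1)+1 from by omega, Nat.factorial_succ]
    have h0 : ((Nat.factorial (2*k+1) : ℝ)) ≠ 0 := by positivity
    push_cast
    field_simp
    ring
  rw [tsum_congr hterm, tsum_mul_left]
  rfl

/-! ### Derivatives of `Dtilde` -/

lemma Dtilde_eq (ν y : ℝ) : Dtilde ν y = (2 : ℝ) ^ (-ν / 2) * Real.sqrt Real.pi *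
    (oddD (ν-1) y / Real.Gamma ((ν + 1) / 2) -
      Real.sqrt 2 * oddS ν y / Real.Gamma (ν / 2)) := by
  rw [Dtilde, evenSeries_eq, oddSeries_eq]

/-- First derivative of `Dtilde ν`. -/
noncomputable def DtildeD (ν y : ℝ) : ℝ := (2 : ℝ) ^ (-ν / 2) * Real.sqrt Real.pi *
    (ν * oddS (ν+1) y / Real.Gamma ((ν + 1) / 2) -
      Real.sqrt 2 * oddD ν y / Real.Gamma (ν / 2))

/-- Second derivative of `Dtilde ν`. -/
noncomputable def DtildeD2 (ν y : ℝ) : ℝ := (2 : ℝ) ^ (-ν / 2) * Real.sqrt Real.pi *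
    (ν * oddD (ν+1) y / Real.Gamma ((ν + 1) / 2) -
      Real.sqrt 2 * ((ν+1) * oddS (ν+2) y) / Real.Gamma (ν / 2))

lemma hasDerivAt_Dtilde {ν : ℝ} (hν : 0 < ν) (y : ℝ) :
    HasDerivAt (Dtilde ν) (DtildeD ν y) y := by
  have h1 : HasDerivAt (fun z => oddD (ν-1) z) ((ν-1+1) * oddS (ν-1+2) y) y :=
    hasDerivAt_oddD (by linarith) y
  rw [show ν-1+1 = ν from by ring, show ν-1+2 = ν+1 from by ring] at h1
  have h2 : HasDerivAt (fun z => oddS ν z) (oddD ν y) y := hasDerivAt_oddS (by linarith) y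
  have h := ((h1.div_const (Real.Gamma ((ν + 1) / 2))).sub
    ((h2.const_mul (Real.sqrt 2)).div_const (Real.Gamma (ν / 2)))).const_mul
    ((2 : ℝ) ^ (-ν / 2) * Real.sqrt Real.pi)
  have hfun : (fun z => (2 : ℝ) ^ (-ν / 2) * Real.sqrt Real.pi *
      (oddD (ν-1) z / Real.Gamma ((ν + 1) / 2) -
        Real.sqrt 2 * oddS ν z / Real.Gamma (ν / 2))) = Dtilde ν :=
    funext fun z => (Dtilde_eq ν z).symm
  rw [← hfun]
  exact h

lemma hasDerivAt_DtildeD {ν : ℝ} (hν : 0 < ν) (y : ℝ) :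
    HasDerivAt (DtildeD ν) (DtildeD2 ν y) y := by
  have h1 : HasDerivAt (fun z => oddS (ν+1) z) (oddD (ν+1) y) y :=
    hasDerivAt_oddS (by linarith) y
  have h2 : HasDerivAt (fun z => oddD ν z) ((ν+1) * oddS (ν+2) y) y :=
    hasDerivAt_oddD (by linarith) y
  have h := (((h1.const_mul ν).div_const (Real.Gamma ((ν + 1) / 2))).sub
    ((h2.const_mul (Real.sqrt 2)).div_const (Real.Gamma (ν / 2)))).const_mul
    ((2 : ℝ) ^ (-ν / 2) * Real.sqrt Real.pi)
  exact h

lemma Dtilde_ODE {ν : ℝ} (hν : 0 < ν) (y : ℝ) :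
    DtildeD2 ν y - y * DtildeD ν y - ν * Dtilde ν y = 0 := by
  have h2 := identity_I2 (μ := ν-1) (by linarith) y
  rw [show ν-1+2 = ν+1 from by ring] at h2
  have h1 := identity_I1 (μ := ν) (by linarith) y
  rw [DtildeD2, DtildeD, Dtilde_eq]
  linear_combination ((2:ℝ) ^ (-ν / 2) * Real.sqrt Real.pi * ν / Real.Gamma ((ν+1)/2)) * h2
    - ((2:ℝ) ^ (-ν / 2) * Real.sqrt Real.pi * Real.sqrt 2 / Real.Gamma (ν/2)) * h1

/-- Let `a, σ̃ > 0` and `b > 0`, and set `σ = σ̃/√(2a)`. Then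
`f(r) = D̃_{b/a}((b − r)/σ)` is twice differentiable on `ℝ` and satisfies
`(σ̃²/2) f''(r) + a (b − r) f'(r) − b f(r) = 0` for all `r ∈ ℝ`. -/
theorem Dtilde_comp_decreasing_solves_OU_ODE (a σt b : ℝ)
    (ha : 0 < a) (hσ : 0 < σt) (hb : 0 < b) :
    ∃ f' f'' : ℝ → ℝ,
      (∀ r : ℝ,
        HasDerivAt (fun r : ℝ => Dtilde (b / a) ((b - r) / (σt / Real.sqrt (2 * a))))
          (f' r) r) ∧
      (∀ r : ℝ, HasDerivAt f' (f'' r) r) ∧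
      (∀ r : ℝ,
        σt ^ 2 / 2 * f'' r + a * (b - r) * f' r -
          b * Dtilde (b / a) ((b - r) / (σt / Real.sqrt (2 * a))) = 0) := by
  set ν := b / a with hνdef
  have hν : 0 < ν := div_pos hb ha
  set σ := σt / Real.sqrt (2 * a) with hσdef
  have hs2a : 0 < Real.sqrt (2 * a) := Real.sqrt_pos.mpr (by linarith)
  have hσ0 : 0 < σ := div_pos hσ hs2a
  have hσsq : σ ^ 2 = σt ^ 2 / (2 * a) := by
    rw [hσdef, div_pow, Real.sq_sqrt (by linarith)]
  have hy : ∀ r : ℝ, HasDerivAt (fun r : ℝ => (b - r) / σ) (-σ⁻¹) r := by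
    intro r
    have h := ((hasDerivAt_id r).const_sub b).div_const σ
    convert h using 1
    · rfl
    · rfl
    · rfl
    field_simp
  refine ⟨fun r => DtildeD ν ((b - r) / σ) * (-σ⁻¹),
    fun r => DtildeD2 ν ((b - r) / σ) * σ⁻¹ * σ⁻¹, ?_, ?_, ?_⟩
  · intro r
    exact (hasDerivAt_Dtilde hν ((b - r) / σ)).comp (h₂ := Dtilde ν) r (hy r)
  · intro r
    have h := ((hasDerivAt_DtildeD hν ((b - r) / σ)).comp (h₂ := DtildeD ν) r (hy r)).mul_const (-σ⁻¹)
    convert h using 1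
    · rfl
    · rfl
    · rfl
    ring
  · intro r
    show σt ^ 2 / 2 * (DtildeD2 ν ((b - r) / σ) * σ⁻¹ * σ⁻¹) +
        a * (b - r) * (DtildeD ν ((b - r) / σ) * -σ⁻¹) -
        b * Dtilde ν ((b - r) / σ) = 0
    set z := (b - r) / σ with hz
    have hODE := Dtilde_ODE hν z
    have hbr : b - r = σ * z := by
      rw [hz, mul_div_cancel₀ _ hσ0.ne']
    have hb' : b = a * ν := by
      rw [hνdef, mul_div_cancel₀ _ ha.ne']
    have hσt2 : σt ^ 2 = 2 * a * σ ^ 2 := by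
      rw [hσsq]; field_simp
    rw [hbr, hσt2, hb']
    have expand : 2 * a * σ ^ 2 / 2 * (DtildeD2 ν z * σ⁻¹ * σ⁻¹) +
        a * (σ * z) * (DtildeD ν z * -σ⁻¹) - a * ν * Dtilde ν z
        = a * (DtildeD2 ν z - z * DtildeD ν z - ν * Dtilde ν z) := by
      field_simp
      ring
    rw [expand, hODE, mul_zero]
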